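/- Weighted Hardy inequality on the punctured ball: for every δ ≠ 0 and every smooth compactly supported function u on B \ {0} ⊂ ℝ³ (requiring u ≡ 0 on ∂B only when δ < 0), one has ‖u‖_{W^{1,p}_{ρ,δ}} ≤ (1/|δ|) ‖∇u‖_{L^p_{ρ,δ−1}}, where ‖u‖_{L^p_{ρ,δ}}^p = ∫ |ρ^{−δ−3/p} u|^p dv. -/

import Mathlib

open Real MeasureTheory

noncomputable section

abbrev E3 := EuclideanSpace ℝ (Fin 3)

namespace HardyAux

lemma glue {F' : Type*} [NormedAddCommGroup F'] [NormedSpace ℝ F']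
    {n : ℕ∞} {f : E3 → F'} {r : ℝ} (hr : 0 < r)
    (h0 : ∀ x ∈ Metric.ball (0 : E3) r, f x = 0)
    (h1 : ContDiffOn ℝ n f {x : E3 | x ≠ 0}) : ContDiff ℝ n f := by
  rw [contDiff_iff_contDiffAt]
  intro x
  by_cases hx : x ∈ Metric.ball (0 : E3) r
  · refine (contDiffAt_const (c := (0 : F'))).congr_of_eventuallyEq ?_
    exact Filter.eventually_of_mem (Metric.isOpen_ball.mem_nhds hx) h0
  · have hx0 : x ≠ 0 := by
      rintro rfl; exact hx (Metric.mem_ball_self hr)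
    exact h1.contDiffAt ((isOpen_ne (x := (0:E3))).mem_nhds hx0)

lemma cont_glue {f : E3 → ℝ} {r : ℝ} (hr : 0 < r)
    (h0 : ∀ x ∈ Metric.ball (0 : E3) r, f x = 0)
    (h1 : ContinuousOn f {x : E3 | x ≠ 0}) : Continuous f :=
  contDiff_zero.mp (glue hr h0 (contDiffOn_zero.mpr h1))

lemma sq_rpow_half (t q : ℝ) : (t ^ 2) ^ (q / 2) = |t| ^ q := by
  rw [← sq_abs t, ← Real.rpow_natCast |t| 2, ← Real.rpow_mul (abs_nonneg t)]
  congr 1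
  push_cast; ring

lemma psi_nonneg {p ε : ℝ} (hp : 0 ≤ p) (hε : 0 ≤ ε) (t : ℝ) :
    0 ≤ (t ^ 2 + ε ^ 2) ^ (p / 2) - ε ^ p := by
  have h1 : (ε ^ 2 : ℝ) ^ (p / 2) ≤ (t ^ 2 + ε ^ 2) ^ (p / 2) :=
    Real.rpow_le_rpow (by positivity) (by nlinarith [sq_nonneg t]) (by positivity)
  have h2 : (ε ^ 2 : ℝ) ^ (p / 2) = ε ^ p := by
    rw [sq_rpow_half, abs_of_nonneg hε]
  linarith

lemma psi_zero {p ε : ℝ} : ((0:ℝ) ^ 2 + ε ^ 2) ^ (p / 2) - ε ^ p = |ε| ^ p - ε ^ p := by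
  rw [← sq_rpow_half ε p]
  norm_num

lemma hasDerivAt_psi (p ε : ℝ) (hε : ε ≠ 0) (t : ℝ) :
    HasDerivAt (fun t : ℝ => (t ^ 2 + ε ^ 2) ^ (p / 2) - ε ^ p)
      (p * t * (t ^ 2 + ε ^ 2) ^ (p / 2 - 1)) t := by
  have hpos : (0:ℝ) < t ^ 2 + ε ^ 2 := by positivity
  have h1 : HasDerivAt (fun t : ℝ => t ^ 2 + ε ^ 2) (2 * t) t := by
    simpa using (hasDerivAt_pow 2 t).add_const (ε ^ 2)
  have h2 := Real.hasDerivAt_rpow_const (x := t ^ 2 + ε ^ 2) (p := p / 2) (Or.inl hpos.ne')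
  have h3 := (h2.comp t h1).sub_const (ε ^ p)
  refine h3.congr_deriv ?_
  ring

def Gsq : E3 → ℝ := fun y => ∑ i, (y i) ^ 2

lemma Gsq_eq (y : E3) : Gsq y = ‖y‖ ^ 2 := by
  rw [EuclideanSpace.norm_eq, Real.sq_sqrt (by positivity)]
  simp [Gsq, Real.norm_eq_abs, sq_abs]

lemma Gsq_contDiff {n : ℕ∞} : ContDiff ℝ n Gsq := by
  apply ContDiff.sum
  intro i _
  exact ((EuclideanSpace.proj i).contDiff (𝕜 := ℝ)).pow 2

lemma rpow_norm_eq (a : ℝ) : (fun y : E3 => ‖y‖ ^ a) = fun y => (Gsq y) ^ (a / 2) := by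
  funext y
  rw [Gsq_eq, ← Real.rpow_natCast ‖y‖ 2, ← Real.rpow_mul (norm_nonneg y)]
  congr 1
  push_cast; ring

lemma contDiffAt_rpow_norm (a : ℝ) {x : E3} (hx : x ≠ 0) {n : ℕ∞} :
    ContDiffAt ℝ n (fun y : E3 => ‖y‖ ^ a) x := by
  rw [rpow_norm_eq]
  refine ContDiffAt.rpow_const_of_ne (Gsq_contDiff.contDiffAt) ?_
  rw [Gsq_eq]
  have h : (0:ℝ) < ‖x‖ := norm_pos_iff.mpr hx
  exact (pow_pos h 2).ne'

lemma exists_hasFDerivAt_rpow_norm (a : ℝ) {x : E3} (hx : x ≠ 0) :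
    ∃ D : E3 →L[ℝ] ℝ, HasFDerivAt (fun y : E3 => ‖y‖ ^ a) D x ∧ D x = a * ‖x‖ ^ a := by
  have hn : (0:ℝ) < ‖x‖ := norm_pos_iff.mpr hx
  have hGx : (0:ℝ) < Gsq x := by rw [Gsq_eq]; positivity
  have hGd : HasFDerivAt Gsq (∑ i, (2 * x i) • (EuclideanSpace.proj i : E3 →L[ℝ] ℝ)) x := by
    apply HasFDerivAt.fun_sum
    intro i _
    have h := (hasDerivAt_pow 2 (x i)).comp_hasFDerivAt x
      ((EuclideanSpace.proj (𝕜 := ℝ) i).hasFDerivAt (x := x))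
    simp at h; exact h
  have hcomp := (Real.hasDerivAt_rpow_const (x := Gsq x) (p := a / 2)
    (Or.inl hGx.ne')).comp_hasFDerivAt x hGd
  simp only [Function.comp_def] at hcomp
  rw [← rpow_norm_eq a] at hcomp
  refine ⟨_, hcomp, ?_⟩
  have hsum : (∑ i, (2 * x i) • (EuclideanSpace.proj i : E3 →L[ℝ] ℝ)) x = 2 * Gsq x := by
    simp only [ContinuousLinearMap.coe_sum', Finset.sum_apply, ContinuousLinearMap.coe_smul',
      Pi.smul_apply, PiLp.proj_apply, smul_eq_mul, Gsq, Finset.mul_sum]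
    congr 1; funext i; ring
  rw [ContinuousLinearMap.smul_apply, hsum, smul_eq_mul]
  have h1 : Gsq x ^ (a / 2 - 1) = Gsq x ^ (a / 2) / Gsq x := Real.rpow_sub_one hGx.ne' _
  have h2 : Gsq x ^ (a / 2) = ‖x‖ ^ a := (congrFun (rpow_norm_eq a) x).symm
  rw [h1, h2]
  field_simp


lemma abs_dpsi_le {p ε : ℝ} (hp : 1 ≤ p) (hε : 0 < ε) (t : ℝ) :
    |p * t * (t ^ 2 + ε ^ 2) ^ (p / 2 - 1)| ≤ p * (t ^ 2 + ε ^ 2) ^ ((p - 1) / 2) := by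
  have hpos : (0:ℝ) < t ^ 2 + ε ^ 2 := by positivity
  have h1 : |t| ≤ (t ^ 2 + ε ^ 2) ^ ((1:ℝ) / 2) := by
    rw [← Real.sqrt_eq_rpow]
    have := Real.sqrt_le_sqrt (show t ^ 2 ≤ t ^ 2 + ε ^ 2 by nlinarith)
    rwa [Real.sqrt_sq_eq_abs] at this
  have h2 : (t ^ 2 + ε ^ 2) ^ ((1:ℝ) / 2) * (t ^ 2 + ε ^ 2) ^ (p / 2 - 1)
      = (t ^ 2 + ε ^ 2) ^ ((p - 1) / 2) := by
    rw [← Real.rpow_add hpos]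
    congr 1; ring
  calc |p * t * (t ^ 2 + ε ^ 2) ^ (p / 2 - 1)|
      = p * |t| * (t ^ 2 + ε ^ 2) ^ (p / 2 - 1) := by
        rw [abs_mul, abs_mul, abs_of_nonneg (by linarith : (0:ℝ) ≤ p),
          abs_of_nonneg (Real.rpow_nonneg hpos.le _)]
    _ ≤ p * (t ^ 2 + ε ^ 2) ^ ((1:ℝ) / 2) * (t ^ 2 + ε ^ 2) ^ (p / 2 - 1) := by
        have hX := Real.rpow_nonneg hpos.le (p / 2 - 1)
        have h3 : |t| * (t ^ 2 + ε ^ 2) ^ (p / 2 - 1)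
            ≤ (t ^ 2 + ε ^ 2) ^ ((1:ℝ) / 2) * (t ^ 2 + ε ^ 2) ^ (p / 2 - 1) :=
          mul_le_mul_of_nonneg_right h1 hX
        rw [mul_assoc, mul_assoc]
        exact mul_le_mul_of_nonneg_left h3 (by linarith)
    _ = p * (t ^ 2 + ε ^ 2) ^ ((p - 1) / 2) := by rw [mul_assoc, h2]


def cF (p δ ε : ℝ) (u : E3 → ℝ) : E3 → ℝ :=
  fun x => ‖x‖ ^ (-p * δ - 3) * (((u x) ^ 2 + ε ^ 2) ^ (p / 2) - ε ^ p)

def ZF (p δ ε : ℝ) (u : E3 → ℝ) : E3 → ℝ :=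
  fun x => ‖x‖ ^ (-p * δ - 2) * ((((u x) ^ 2 + ε ^ 2) ^ ((p - 1) / 2)) * ‖fderiv ℝ u x‖)

section Main

variable {p δ : ℝ} {u : E3 → ℝ} {r0 : ℝ}

lemma cont_weight_mul (hr0 : 0 < r0) {b : ℝ} {g : E3 → ℝ} (hg : Continuous g)
    (hg0 : ∀ x ∈ Metric.ball (0 : E3) r0, g x = 0) :
    Continuous (fun x : E3 => ‖x‖ ^ b * g x) := by
  apply cont_glue hr0 (fun x hx => by rw [hg0 x hx, mul_zero])
  refine ContinuousOn.mul ?_ hg.continuousOn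
  exact ContinuousOn.rpow_const continuous_norm.continuousOn
    (fun x hx => Or.inl (norm_ne_zero_iff.mpr hx))

lemma step_eps (hp : 1 ≤ p) (hr0 : 0 < r0)
    (hu : ContDiff ℝ (⊤ : ℕ∞) u)
    (hu0 : ∀ x ∈ Metric.ball (0 : E3) r0, u x = 0)
    (hcpt : HasCompactSupport u) {ε : ℝ} (hε : 0 < ε) :
    |δ| * (∫ x : E3, cF p δ ε u x) ≤ ∫ x : E3, ZF p δ ε u x := by
  have hp0 : (0:ℝ) < p := lt_of_lt_of_le one_pos hp
  set K := tsupport u with hK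
  have hKc : IsClosed K := isClosed_tsupport u
  have hKcpt : IsCompact K := hcpt
  have hsuppu : ∀ x, x ∉ K → u x = 0 := fun x hx => image_eq_zero_of_notMem_tsupport hx
  have hDuK : ∀ x, x ∉ K → fderiv ℝ u x = 0 := by
    intro x hx
    by_contra h
    exact hx (support_fderiv_subset (𝕜 := ℝ) (Function.mem_support.mpr h))
  have hDu0 : ∀ x ∈ Metric.ball (0 : E3) r0, fderiv ℝ u x = 0 := by
    intro x hx
    have hev : u =ᶠ[nhds x] (fun _ => (0:ℝ)) :=
      Filter.eventually_of_mem (Metric.isOpen_ball.mem_nhds hx) hu0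
    rw [hev.fderiv_eq]
    exact fderiv_const_apply 0
  have hle1 : (1 : WithTop ℕ∞) ≤ ((⊤ : ℕ∞) : WithTop ℕ∞) := by exact_mod_cast le_top
  have hudiff : Differentiable ℝ u := hu.differentiable (by simp)
  have hDucont : Continuous (fderiv ℝ u) := hu.continuous_fderiv (by simp)
  have hpsi0 : ((0:ℝ) ^ 2 + ε ^ 2) ^ (p / 2) - ε ^ p = 0 := by
    rw [psi_zero, abs_of_nonneg hε.le]; ring
  set c : E3 → ℝ := cF p δ ε u with hcdef
  -- c vanishes near 0 and off K
  have hc0 : ∀ x ∈ Metric.ball (0 : E3) r0, c x = 0 := by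
    intro x hx
    simp only [hcdef, cF, hu0 x hx, hpsi0, mul_zero]
  have hcK : ∀ x, x ∉ K → c x = 0 := by
    intro x hx
    simp only [hcdef, cF, hsuppu x hx, hpsi0, mul_zero]
  -- smoothness of c
  have hψcd : ContDiff ℝ 1 (fun t : ℝ => (t ^ 2 + ε ^ 2) ^ (p / 2) - ε ^ p) := by
    apply ContDiff.sub _ contDiff_const
    rw [contDiff_iff_contDiffAt]
    intro t
    exact (((contDiff_id.pow 2).add contDiff_const).contDiffAt).rpow_const_of_ne (by positivity)
  have hccd : ContDiff ℝ 1 c := by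
    apply glue hr0 hc0
    intro x hx
    exact ((contDiffAt_rpow_norm (-p*δ-3) hx).mul
      ((hψcd.comp (hu.of_le hle1)).contDiffAt)).contDiffWithinAt
  have hcdiff : Differentiable ℝ c := hccd.differentiable one_ne_zero
  have hc'cont : Continuous (fderiv ℝ c) := hccd.continuous_fderiv one_ne_zero
  have hsupc : Function.support c ⊆ K := by
    intro x hx
    by_contra h
    exact hx (hcK x h)
  have hsupc' : Function.support (fderiv ℝ c) ⊆ K :=
    (support_fderiv_subset (𝕜 := ℝ)).trans (closure_minimal hsupc hKc)
  -- integrability helper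
  have hint : ∀ (f : E3 → ℝ), Continuous f → Function.support f ⊆ K → Integrable f volume := by
    intro f hf hs
    exact hf.integrable_of_hasCompactSupport
      (HasCompactSupport.intro hKcpt (fun x hx => Function.notMem_support.mp (fun hm => hx (hs hm))))
  have hintc : Integrable c volume := hint c hccd.continuous hsupc
  -- value of the derivative of c in the radial direction
  have hDcval : ∀ x : E3, fderiv ℝ c x x =
      (-p*δ-3) * c x + ‖x‖ ^ (-p*δ-3) *
        ((p * u x * ((u x) ^ 2 + ε ^ 2) ^ (p / 2 - 1)) * (fderiv ℝ u x x)) := by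
    intro x
    rcases eq_or_ne x 0 with rfl | hx
    · have hc00 : c 0 = 0 := hc0 0 (Metric.mem_ball_self hr0)
      simp [hc00]
    · obtain ⟨D1, hD1, hD1x⟩ := exists_hasFDerivAt_rpow_norm (-p*δ-3) hx
      have h2 : HasFDerivAt (fun y => ((u y) ^ 2 + ε ^ 2) ^ (p / 2) - ε ^ p)
          ((p * u x * ((u x) ^ 2 + ε ^ 2) ^ (p / 2 - 1)) • fderiv ℝ u x) x :=
        (hasDerivAt_psi p ε hε.ne' (u x)).comp_hasFDerivAt x (hudiff x).hasFDerivAt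
      have hcd : HasFDerivAt c
          (‖x‖ ^ (-p*δ-3) • ((p * u x * ((u x) ^ 2 + ε ^ 2) ^ (p / 2 - 1)) • fderiv ℝ u x)
            + (((u x) ^ 2 + ε ^ 2) ^ (p / 2) - ε ^ p) • D1) x := hD1.mul h2
      rw [hcd.fderiv]
      simp only [ContinuousLinearMap.add_apply, ContinuousLinearMap.coe_smul', Pi.smul_apply,
        smul_eq_mul]
      rw [hD1x]
      simp only [hcdef, cF]
      ring
  -- the integration by parts identity
  have hxsum : ∀ x : E3, ∑ i, x i • EuclideanSpace.single i (1:ℝ) = x := fun x => by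
    simpa using (EuclideanSpace.basisFun (Fin 3) ℝ).sum_repr x
  have hLsum : ∀ (L : E3 →L[ℝ] ℝ) (x : E3),
      ∑ i, L (EuclideanSpace.single i (1:ℝ)) * x i = L x := by
    intro L x
    calc ∑ i, L (EuclideanSpace.single i (1:ℝ)) * x i
        = ∑ i, L (x i • EuclideanSpace.single i (1:ℝ)) := by
          refine Finset.sum_congr rfl (fun i _ => ?_)
          rw [ContinuousLinearMap.map_smul, smul_eq_mul, mul_comm]
      _ = L (∑ i, x i • EuclideanSpace.single i (1:ℝ)) := (map_sum L _ _).symm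
      _ = L x := by rw [hxsum x]
  have hintf : ∀ i : Fin 3,
      Integrable (fun x : E3 => fderiv ℝ c x (EuclideanSpace.single i (1:ℝ)) * x i) volume := by
    intro i
    refine hint _ ?_ ?_
    · exact (hc'cont.clm_apply continuous_const).mul (EuclideanSpace.proj (𝕜 := ℝ) i).continuous
    · intro x hx
      refine hsupc' (Function.mem_support.mpr fun h => hx ?_)
      simp only [h, ContinuousLinearMap.zero_apply, zero_mul]
  have hibp : ∀ i : Fin 3, ∫ x : E3, c x
      = - ∫ x : E3, fderiv ℝ c x (EuclideanSpace.single i (1:ℝ)) * x i := by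
    intro i
    have hfd : ∀ x : E3, fderiv ℝ (fun y : E3 => y i) x
        = (EuclideanSpace.proj (𝕜 := ℝ) i : E3 →L[ℝ] ℝ) := by
      intro x
      exact HasFDerivAt.fderiv (ContinuousLinearMap.hasFDerivAt (EuclideanSpace.proj (𝕜 := ℝ) i))
    have h := integral_mul_fderiv_eq_neg_fderiv_mul_of_integrable (μ := volume)
      (f := c) (g := fun y : E3 => (EuclideanSpace.proj (𝕜 := ℝ) i) y)
      (v := EuclideanSpace.single i (1:ℝ)) ?_ ?_ ?_ (fun x _ => hcdiff x)
      (fun x _ => (EuclideanSpace.proj (𝕜 := ℝ) i).differentiable x)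
    · simp only [hfd, PiLp.proj_apply, EuclideanSpace.single_apply, if_pos, mul_one] at h
      simpa using h
    · refine hint _ ?_ ?_
      · exact (hc'cont.clm_apply continuous_const).mul (EuclideanSpace.proj (𝕜 := ℝ) i).continuous
      · intro x hx
        refine hsupc' (Function.mem_support.mpr fun hzero => hx ?_)
        simp only [hzero, ContinuousLinearMap.zero_apply, zero_mul, PiLp.proj_apply]
    · have heq : (fun x : E3 => c x * fderiv ℝ (fun y : E3 => (EuclideanSpace.proj (𝕜 := ℝ) i) y) x
          (EuclideanSpace.single i (1:ℝ))) = c := funext fun x => by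
        simp [hfd, EuclideanSpace.single_apply]
      rw [heq]
      exact hintc
    · refine hint _ (hccd.continuous.mul (EuclideanSpace.proj (𝕜 := ℝ) i).continuous) ?_
      intro x hx
      refine hsupc (Function.mem_support.mpr fun hzero => hx ?_)
      simp only [hzero, zero_mul, PiLp.proj_apply]
  have h3c : (3:ℝ) * ∫ x : E3, c x = - ∫ x : E3, fderiv ℝ c x x := by
    calc (3:ℝ) * ∫ x : E3, c x = ∑ _i : Fin 3, ∫ x : E3, c x := by
          rw [Finset.sum_const, Finset.card_univ, Fintype.card_fin, nsmul_eq_mul]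
          norm_num
      _ = ∑ i : Fin 3, - ∫ x : E3, fderiv ℝ c x (EuclideanSpace.single i (1:ℝ)) * x i :=
          Finset.sum_congr rfl (fun i _ => hibp i)
      _ = - ∑ i : Fin 3, ∫ x : E3, fderiv ℝ c x (EuclideanSpace.single i (1:ℝ)) * x i := by
          rw [Finset.sum_neg_distrib]
      _ = - ∫ x : E3, ∑ i : Fin 3, fderiv ℝ c x (EuclideanSpace.single i (1:ℝ)) * x i := by
          rw [← integral_finset_sum _ (fun i _ => hintf i)]
      _ = - ∫ x : E3, fderiv ℝ c x x := by
          congr 1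
          exact integral_congr_ae (Filter.Eventually.of_forall fun x => hLsum (fderiv ℝ c x) x)
  have hR_int : Integrable (fun x : E3 => ‖x‖ ^ (-p*δ-3) *
      ((p * u x * ((u x) ^ 2 + ε ^ 2) ^ (p / 2 - 1)) * fderiv ℝ u x x)) volume := by
    have h1 : Integrable (fun x : E3 => fderiv ℝ c x x - (-p*δ-3) * c x) volume := by
      refine Integrable.sub (hint _ (hc'cont.clm_apply continuous_id) ?_) (hintc.const_mul _)
      intro x hx
      refine hsupc' (Function.mem_support.mpr fun h => hx ?_)
      simp only [h, ContinuousLinearMap.zero_apply]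
    refine h1.congr (Filter.Eventually.of_forall fun x => ?_)
    show fderiv ℝ c x x - (-p*δ-3) * c x = _
    rw [hDcval x]; ring
  have hkey : (p * δ) * ∫ x : E3, c x = ∫ x : E3, ‖x‖ ^ (-p*δ-3) *
      ((p * u x * ((u x) ^ 2 + ε ^ 2) ^ (p / 2 - 1)) * fderiv ℝ u x x) := by
    have hsplit : ∫ x : E3, fderiv ℝ c x x = (-p*δ-3) * (∫ x : E3, c x)
        + ∫ x : E3, ‖x‖ ^ (-p*δ-3) *
          ((p * u x * ((u x) ^ 2 + ε ^ 2) ^ (p / 2 - 1)) * fderiv ℝ u x x) := by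
      calc ∫ x : E3, fderiv ℝ c x x
          = ∫ x : E3, ((-p*δ-3) * c x + ‖x‖ ^ (-p*δ-3) *
            ((p * u x * ((u x) ^ 2 + ε ^ 2) ^ (p / 2 - 1)) * fderiv ℝ u x x)) :=
            integral_congr_ae (Filter.Eventually.of_forall hDcval)
        _ = (∫ x : E3, (-p*δ-3) * c x) + ∫ x : E3, ‖x‖ ^ (-p*δ-3) *
            ((p * u x * ((u x) ^ 2 + ε ^ 2) ^ (p / 2 - 1)) * fderiv ℝ u x x) :=
            integral_add (hintc.const_mul _) hR_int
        _ = (-p*δ-3) * (∫ x : E3, c x) + ∫ x : E3, ‖x‖ ^ (-p*δ-3) *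
            ((p * u x * ((u x) ^ 2 + ε ^ 2) ^ (p / 2 - 1)) * fderiv ℝ u x x) := by
            rw [integral_const_mul]
    linear_combination hsplit - h3c
  -- continuity and integrability of the majorant
  have hZcont : Continuous (ZF p δ ε u) := by
    refine cont_weight_mul hr0 ?_ ?_
    · refine Continuous.mul ?_ hDucont.norm
      exact ((hu.continuous.pow 2).add continuous_const).rpow_const
        (fun x => Or.inl (by simp only [Pi.add_apply, Pi.pow_apply]; positivity))
    · intro x hx
      rw [hDu0 x hx]
      simp
  have hZsupp : Function.support (ZF p δ ε u) ⊆ K := by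
    intro x hx
    by_contra h
    apply hx
    simp only [ZF, hDuK x h]
    simp
  have hZint : Integrable (ZF p δ ε u) volume := hint _ hZcont hZsupp
  have hRbound : ∀ x : E3, ‖‖x‖ ^ (-p*δ-3) *
      ((p * u x * ((u x) ^ 2 + ε ^ 2) ^ (p / 2 - 1)) * fderiv ℝ u x x)‖
      ≤ p * ZF p δ ε u x := by
    intro x
    rcases eq_or_ne x 0 with rfl | hx
    · have h0 : fderiv ℝ u 0 (0 : E3) = 0 := (fderiv ℝ u 0).map_zero
      rw [h0]
      simp only [mul_zero, norm_zero, ZF]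
      positivity
    · have hnx : (0:ℝ) < ‖x‖ := norm_pos_iff.mpr hx
      have hb1 : |fderiv ℝ u x x| ≤ ‖fderiv ℝ u x‖ * ‖x‖ := (fderiv ℝ u x).le_opNorm x
      have hb2 := abs_dpsi_le hp hε (u x)
      calc ‖‖x‖ ^ (-p*δ-3) * ((p * u x * ((u x) ^ 2 + ε ^ 2) ^ (p / 2 - 1)) * fderiv ℝ u x x)‖
          = ‖x‖ ^ (-p*δ-3) * (|p * u x * ((u x) ^ 2 + ε ^ 2) ^ (p / 2 - 1)| * |fderiv ℝ u x x|) := by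
            rw [Real.norm_eq_abs, abs_mul, abs_mul,
              abs_of_nonneg (Real.rpow_nonneg (norm_nonneg x) _)]
        _ ≤ ‖x‖ ^ (-p*δ-3) * ((p * ((u x) ^ 2 + ε ^ 2) ^ ((p - 1) / 2)) * (‖fderiv ℝ u x‖ * ‖x‖)) := by
            refine mul_le_mul_of_nonneg_left ?_ (Real.rpow_nonneg (norm_nonneg x) _)
            exact mul_le_mul hb2 hb1 (abs_nonneg _) (by positivity)
        _ = p * ZF p δ ε u x := by
            simp only [ZF]
            rw [show (-p*δ-2 : ℝ) = (-p*δ-3) + 1 by ring, Real.rpow_add hnx, Real.rpow_one]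
            ring
  have hcnn : 0 ≤ ∫ x : E3, c x := by
    refine integral_nonneg (fun x => ?_)
    simp only [hcdef, cF]
    exact mul_nonneg (Real.rpow_nonneg (norm_nonneg x) _) (psi_nonneg hp0.le hε.le _)
  have habs : |(p * δ) * ∫ x : E3, c x| ≤ ∫ x : E3, p * ZF p δ ε u x := by
    rw [hkey, ← Real.norm_eq_abs]
    exact norm_integral_le_of_norm_le (hZint.const_mul p) (Filter.Eventually.of_forall hRbound)
  have hfin : p * (|δ| * ∫ x : E3, c x) ≤ p * ∫ x : E3, ZF p δ ε u x := by
    have h1 : |(p * δ) * ∫ x : E3, c x| = p * (|δ| * ∫ x : E3, c x) := by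
      rw [abs_mul, abs_mul, abs_of_nonneg hp0.le, abs_of_nonneg hcnn]
      ring
    rw [integral_const_mul] at habs
    linarith [habs, h1.symm.le]
  exact le_of_mul_le_mul_left hfin hp0



lemma hardy_main (hp : 1 ≤ p) (hδ : δ ≠ 0) (hr0 : 0 < r0)
    (hu : ContDiff ℝ (⊤ : ℕ∞) u)
    (hu0 : ∀ x ∈ Metric.ball (0 : E3) r0, u x = 0)
    (hcpt : HasCompactSupport u) :
    |δ| * (∫ x : E3, ‖x‖ ^ (-p * δ - 3) * |u x| ^ p)
      ≤ (∫ x : E3, ‖x‖ ^ (-p * δ - 3) * |u x| ^ p) ^ ((p - 1) / p)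
        * (∫ x : E3, ‖x‖ ^ (-p * δ - 3 + p) * ‖fderiv ℝ u x‖ ^ p) ^ (1 / p) := by
  have hp0 : (0:ℝ) < p := lt_of_lt_of_le one_pos hp
  set K := tsupport u with hK
  have hKc : IsClosed K := isClosed_tsupport u
  have hKcpt : IsCompact K := hcpt
  have hsuppu : ∀ x, x ∉ K → u x = 0 := fun x hx => image_eq_zero_of_notMem_tsupport hx
  have hDuK : ∀ x, x ∉ K → fderiv ℝ u x = 0 := by
    intro x hx
    by_contra h
    exact hx (support_fderiv_subset (𝕜 := ℝ) (Function.mem_support.mpr h))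
  have hDu0 : ∀ x ∈ Metric.ball (0 : E3) r0, fderiv ℝ u x = 0 := by
    intro x hx
    have hev : u =ᶠ[nhds x] (fun _ => (0:ℝ)) :=
      Filter.eventually_of_mem (Metric.isOpen_ball.mem_nhds hx) hu0
    rw [hev.fderiv_eq]
    exact fderiv_const_apply 0
  have hKr : ∀ x ∈ K, r0 ≤ ‖x‖ := by
    intro x hx
    have hsub : Function.support u ⊆ (Metric.ball (0:E3) r0)ᶜ :=
      fun y hy hball => hy (hu0 y hball)
    have h2 : K ⊆ (Metric.ball (0:E3) r0)ᶜ :=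
      closure_minimal hsub Metric.isOpen_ball.isClosed_compl
    have := h2 hx
    simp only [Set.mem_compl_iff, Metric.mem_ball, dist_zero_right, not_lt] at this
    exact this
  have hKne : ∀ x ∈ K, x ≠ 0 := by
    intro x hx h0
    have := hKr x hx
    rw [h0, norm_zero] at this
    linarith
  have hle1 : (1 : WithTop ℕ∞) ≤ ((⊤ : ℕ∞) : WithTop ℕ∞) := by exact_mod_cast le_top
  have hDucont : Continuous (fderiv ℝ u) := hu.continuous_fderiv (by simp)
  have hint : ∀ (f : E3 → ℝ), Continuous f → Function.support f ⊆ K → Integrable f volume := by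
    intro f hf hs
    exact hf.integrable_of_hasCompactSupport
      (HasCompactSupport.intro hKcpt (fun x hx => Function.notMem_support.mp (fun hm => hx (hs hm))))
  have hpne : p ≠ 0 := hp0.ne'
  -- the three limit functions
  have hfAcont : Continuous (fun x : E3 => ‖x‖ ^ (-p * δ - 3) * |u x| ^ p) := by
    refine cont_weight_mul hr0 ((hu.continuous.abs).rpow_const (fun x => Or.inr hp0.le)) ?_
    intro x hx
    show |u x| ^ p = 0
    rw [hu0 x hx, abs_zero, Real.zero_rpow hpne]
  have hfAsupp : Function.support (fun x : E3 => ‖x‖ ^ (-p * δ - 3) * |u x| ^ p) ⊆ K := by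
    intro x hx
    by_contra h
    refine hx ?_
    show ‖x‖ ^ (-p * δ - 3) * |u x| ^ p = 0
    rw [hsuppu x h, abs_zero, Real.zero_rpow hpne, mul_zero]
  have hintA := hint _ hfAcont hfAsupp
  have hfBcont : Continuous (fun x : E3 => ‖x‖ ^ (-p * δ - 3 + p) * ‖fderiv ℝ u x‖ ^ p) := by
    refine cont_weight_mul hr0 ((hDucont.norm).rpow_const (fun x => Or.inr hp0.le)) ?_
    intro x hx
    show ‖fderiv ℝ u x‖ ^ p = 0
    rw [hDu0 x hx, norm_zero, Real.zero_rpow hpne]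
  have hfBsupp : Function.support (fun x : E3 => ‖x‖ ^ (-p * δ - 3 + p) * ‖fderiv ℝ u x‖ ^ p)
      ⊆ K := by
    intro x hx
    by_contra h
    refine hx ?_
    show ‖x‖ ^ (-p * δ - 3 + p) * ‖fderiv ℝ u x‖ ^ p = 0
    rw [hDuK x h, norm_zero, Real.zero_rpow hpne, mul_zero]
  have hintB := hint _ hfBcont hfBsupp
  have hZcont : Continuous (fun x : E3 =>
      ‖x‖ ^ (-p * δ - 2) * (((u x) ^ 2) ^ ((p - 1) / 2) * ‖fderiv ℝ u x‖)) := by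
    refine cont_weight_mul hr0
      (((hu.continuous.pow 2).rpow_const (fun x => Or.inr (by linarith : (0:ℝ) ≤ (p-1)/2))).mul
        hDucont.norm) ?_
    intro x hx
    show ((u x) ^ 2) ^ ((p - 1) / 2) * ‖fderiv ℝ u x‖ = 0
    rw [hDu0 x hx, norm_zero, mul_zero]
  have hZsupp : Function.support (fun x : E3 =>
      ‖x‖ ^ (-p * δ - 2) * (((u x) ^ 2) ^ ((p - 1) / 2) * ‖fderiv ℝ u x‖)) ⊆ K := by
    intro x hx
    by_contra h
    refine hx ?_
    show ‖x‖ ^ (-p * δ - 2) * (((u x) ^ 2) ^ ((p - 1) / 2) * ‖fderiv ℝ u x‖) = 0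
    rw [hDuK x h, norm_zero, mul_zero, mul_zero]
  have hintZ := hint _ hZcont hZsupp
  -- the approximating sequence
  set εn : ℕ → ℝ := fun n => 1 / ((n:ℝ) + 1) with hεn_def
  have hεn : ∀ n, 0 < εn n := fun n => by positivity
  have hεn1 : ∀ n, εn n ≤ 1 := by
    intro n
    rw [hεn_def]
    rw [div_le_one (by positivity)]
    linarith [Nat.cast_nonneg (α := ℝ) n]
  have hεn0 : Filter.Tendsto εn Filter.atTop (nhds 0) := tendsto_one_div_add_atTop_nhds_zero_nat
  have hcFcont : ∀ n, Continuous (cF p δ (εn n) u) := by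
    intro n
    show Continuous (fun x : E3 => ‖x‖ ^ (-p*δ-3) * (((u x) ^ 2 + (εn n) ^ 2) ^ (p/2) - (εn n) ^ p))
    refine cont_weight_mul hr0 ?_ ?_
    · exact (((hu.continuous.pow 2).add continuous_const).rpow_const
        (fun x => Or.inl (by have := hεn n; simp only [Pi.add_apply, Pi.pow_apply]; positivity))).sub continuous_const
    · intro x hx
      show ((u x) ^ 2 + (εn n) ^ 2) ^ (p/2) - (εn n) ^ p = 0
      rw [hu0 x hx, psi_zero, abs_of_nonneg (hεn n).le, sub_self]
  have hZFcont : ∀ n, Continuous (ZF p δ (εn n) u) := by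
    intro n
    show Continuous (fun x : E3 =>
      ‖x‖ ^ (-p*δ-2) * ((((u x) ^ 2 + (εn n) ^ 2) ^ ((p-1)/2)) * ‖fderiv ℝ u x‖))
    refine cont_weight_mul hr0 ?_ ?_
    · exact (((hu.continuous.pow 2).add continuous_const).rpow_const
        (fun x => Or.inl (by have := hεn n; simp only [Pi.add_apply, Pi.pow_apply]; positivity))).mul hDucont.norm
    · intro x hx
      show (((u x) ^ 2 + (εn n) ^ 2) ^ ((p-1)/2)) * ‖fderiv ℝ u x‖ = 0
      rw [hDu0 x hx, norm_zero, mul_zero]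
  -- dominating functions
  obtain ⟨C, hC⟩ := hKcpt.exists_bound_of_continuousOn
    (f := fun x : E3 => ‖x‖ ^ (-p * δ - 3) * ((u x) ^ 2 + 1) ^ (p / 2)) (by
      refine ContinuousOn.mul ?_ ?_
      · exact ContinuousOn.rpow_const continuous_norm.continuousOn
          (fun x hx => Or.inl (norm_ne_zero_iff.mpr (hKne x hx)))
      · exact (((hu.continuous.pow 2).add continuous_const).rpow_const
          (fun x => Or.inl (by simp only [Pi.add_apply, Pi.pow_apply]; positivity))).continuousOn)
  obtain ⟨C', hC'⟩ := hKcpt.exists_bound_of_continuousOn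
    (f := fun x : E3 => ‖x‖ ^ (-p * δ - 2) * (((u x) ^ 2 + 1) ^ ((p - 1) / 2)
      * ‖fderiv ℝ u x‖)) (by
      refine ContinuousOn.mul ?_ ?_
      · exact ContinuousOn.rpow_const continuous_norm.continuousOn
          (fun x hx => Or.inl (norm_ne_zero_iff.mpr (hKne x hx)))
      · exact ((((hu.continuous.pow 2).add continuous_const).rpow_const
          (fun x => Or.inl (by simp only [Pi.add_apply, Pi.pow_apply]; positivity))).mul hDucont.norm).continuousOn)
  have hboundA_int : Integrable (K.indicator (fun _ => C)) volume := by
    rw [integrable_indicator_iff hKc.measurableSet]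
    exact integrableOn_const hKcpt.measure_lt_top.ne
  have hboundB_int : Integrable (K.indicator (fun _ => C')) volume := by
    rw [integrable_indicator_iff hKc.measurableSet]
    exact integrableOn_const hKcpt.measure_lt_top.ne
  -- convergence of the left-hand sides
  have hTA : Filter.Tendsto (fun n => ∫ x : E3, cF p δ (εn n) u x) Filter.atTop
      (nhds (∫ x : E3, ‖x‖ ^ (-p * δ - 3) * |u x| ^ p)) := by
    refine tendsto_integral_of_dominated_convergence (K.indicator (fun _ => C))
      (fun n => (hcFcont n).aestronglyMeasurable) hboundA_int ?_ ?_
    · intro n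
      refine Filter.Eventually.of_forall (fun x => ?_)
      by_cases hx : x ∈ K
      · rw [Set.indicator_of_mem hx]
        have h1 : 0 ≤ cF p δ (εn n) u x :=
          mul_nonneg (Real.rpow_nonneg (norm_nonneg x) _) (psi_nonneg hp0.le (hεn n).le _)
        have h2 : cF p δ (εn n) u x ≤ ‖x‖ ^ (-p * δ - 3) * ((u x) ^ 2 + 1) ^ (p / 2) := by
          show ‖x‖ ^ (-p*δ-3) * (((u x) ^ 2 + (εn n) ^ 2) ^ (p/2) - (εn n) ^ p) ≤ _
          refine mul_le_mul_of_nonneg_left ?_ (Real.rpow_nonneg (norm_nonneg x) _)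
          have h3 : ((u x) ^ 2 + (εn n) ^ 2) ^ (p/2) ≤ ((u x) ^ 2 + 1) ^ (p/2) := by
            refine Real.rpow_le_rpow (by positivity) ?_ (by positivity)
            have : (εn n) ^ 2 ≤ 1 ^ 2 := pow_le_pow_left₀ (hεn n).le (hεn1 n) 2
            nlinarith
          have h4 : 0 ≤ (εn n) ^ p := Real.rpow_nonneg (hεn n).le p
          linarith
        rw [Real.norm_eq_abs, abs_of_nonneg h1]
        exact h2.trans ((le_abs_self _).trans (hC x hx))
      · rw [Set.indicator_of_notMem hx]
        have h0 : cF p δ (εn n) u x = 0 := by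
          show ‖x‖ ^ (-p*δ-3) * (((u x) ^ 2 + (εn n) ^ 2) ^ (p/2) - (εn n) ^ p) = 0
          rw [hsuppu x hx, psi_zero, abs_of_nonneg (hεn n).le, sub_self, mul_zero]
        rw [h0, norm_zero]
    · refine Filter.Eventually.of_forall (fun x => ?_)
      have h1 : Filter.Tendsto (fun n => ((u x) ^ 2 + (εn n) ^ 2) ^ (p/2)) Filter.atTop
          (nhds (((u x) ^ 2) ^ (p/2))) := by
        have hb : Filter.Tendsto (fun n => (u x) ^ 2 + (εn n) ^ 2) Filter.atTop
            (nhds ((u x) ^ 2)) := by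
          have := tendsto_const_nhds (x := (u x) ^ 2) (f := Filter.atTop (α := ℕ)) |>.add
            ((hεn0.pow 2))
          simpa using this
        have hc : ContinuousAt (fun y : ℝ => y ^ (p/2)) ((u x) ^ 2) :=
          Real.continuousAt_rpow_const _ _ (Or.inr (by positivity))
        exact hc.tendsto.comp hb
      have h2 : Filter.Tendsto (fun n => (εn n) ^ p) Filter.atTop (nhds 0) := by
        have hc : ContinuousAt (fun y : ℝ => y ^ p) 0 :=
          Real.continuousAt_rpow_const 0 p (Or.inr hp0.le)
        have := hc.tendsto.comp hεn0
        simpa [Function.comp_def, Real.zero_rpow hpne] using this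
      have h3 := (tendsto_const_nhds (x := ‖x‖ ^ (-p * δ - 3))
        (f := Filter.atTop (α := ℕ))).mul (h1.sub h2)
      have h4 : ((u x) ^ 2) ^ (p/2) - 0 = |u x| ^ p := by rw [sub_zero, sq_rpow_half]
      rw [h4] at h3
      exact h3
  have hTZ : Filter.Tendsto (fun n => ∫ x : E3, ZF p δ (εn n) u x) Filter.atTop
      (nhds (∫ x : E3, ‖x‖ ^ (-p * δ - 2) * (((u x) ^ 2) ^ ((p - 1) / 2)
        * ‖fderiv ℝ u x‖))) := by
    refine tendsto_integral_of_dominated_convergence (K.indicator (fun _ => C'))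
      (fun n => (hZFcont n).aestronglyMeasurable) hboundB_int ?_ ?_
    · intro n
      refine Filter.Eventually.of_forall (fun x => ?_)
      by_cases hx : x ∈ K
      · rw [Set.indicator_of_mem hx]
        have h1 : 0 ≤ ZF p δ (εn n) u x := by
          show 0 ≤ ‖x‖ ^ (-p*δ-2) * ((((u x) ^ 2 + (εn n) ^ 2) ^ ((p-1)/2)) * ‖fderiv ℝ u x‖)
          positivity
        have h2 : ZF p δ (εn n) u x ≤ ‖x‖ ^ (-p * δ - 2) * (((u x) ^ 2 + 1) ^ ((p - 1) / 2)
            * ‖fderiv ℝ u x‖) := by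
          show ‖x‖ ^ (-p*δ-2) * ((((u x) ^ 2 + (εn n) ^ 2) ^ ((p-1)/2)) * ‖fderiv ℝ u x‖) ≤ _
          refine mul_le_mul_of_nonneg_left ?_ (Real.rpow_nonneg (norm_nonneg x) _)
          refine mul_le_mul_of_nonneg_right ?_ (norm_nonneg _)
          refine Real.rpow_le_rpow (by positivity) ?_ (by linarith : (0:ℝ) ≤ (p-1)/2)
          have : (εn n) ^ 2 ≤ 1 ^ 2 := pow_le_pow_left₀ (hεn n).le (hεn1 n) 2
          nlinarith
        rw [Real.norm_eq_abs, abs_of_nonneg h1]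
        exact h2.trans ((le_abs_self _).trans (hC' x hx))
      · rw [Set.indicator_of_notMem hx]
        have h0 : ZF p δ (εn n) u x = 0 := by
          show ‖x‖ ^ (-p*δ-2) * ((((u x) ^ 2 + (εn n) ^ 2) ^ ((p-1)/2)) * ‖fderiv ℝ u x‖) = 0
          rw [hDuK x hx, norm_zero, mul_zero, mul_zero]
        rw [h0, norm_zero]
    · refine Filter.Eventually.of_forall (fun x => ?_)
      have hb : Filter.Tendsto (fun n => (u x) ^ 2 + (εn n) ^ 2) Filter.atTop
          (nhds ((u x) ^ 2)) := by
        have := tendsto_const_nhds (x := (u x) ^ 2) (f := Filter.atTop (α := ℕ)) |>.add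
          ((hεn0.pow 2))
        simpa using this
      have hc : ContinuousAt (fun y : ℝ => y ^ ((p - 1)/2)) ((u x) ^ 2) :=
        Real.continuousAt_rpow_const _ _ (Or.inr (by linarith : (0:ℝ) ≤ (p-1)/2))
      have h1 := hc.tendsto.comp hb
      have h3 := (tendsto_const_nhds (x := ‖x‖ ^ (-p * δ - 2))
        (f := Filter.atTop (α := ℕ))).mul
        (h1.mul (tendsto_const_nhds (x := ‖fderiv ℝ u x‖)))
      exact h3
  -- pass to the limit in step_eps
  have hlim : |δ| * (∫ x : E3, ‖x‖ ^ (-p * δ - 3) * |u x| ^ p)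
      ≤ ∫ x : E3, ‖x‖ ^ (-p * δ - 2) * (((u x) ^ 2) ^ ((p - 1) / 2) * ‖fderiv ℝ u x‖) :=
    le_of_tendsto_of_tendsto' (hTA.const_mul |δ|) hTZ
      (fun n => step_eps hp hr0 hu hu0 hcpt (hεn n))
  -- Hölder step
  rcases eq_or_lt_of_le hp with hp1 | hp1
  · -- p = 1
    have hZB : ∫ x : E3, ‖x‖ ^ (-p * δ - 2) * (((u x) ^ 2) ^ ((p - 1) / 2) * ‖fderiv ℝ u x‖)
        = ∫ x : E3, ‖x‖ ^ (-p * δ - 3 + p) * ‖fderiv ℝ u x‖ ^ p := by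
      refine integral_congr_ae (Filter.Eventually.of_forall (fun x => ?_))
      show ‖x‖ ^ (-p * δ - 2) * (((u x) ^ 2) ^ ((p - 1) / 2) * ‖fderiv ℝ u x‖)
        = ‖x‖ ^ (-p * δ - 3 + p) * ‖fderiv ℝ u x‖ ^ p
      rw [← hp1]
      rw [show ((1:ℝ) - 1) / 2 = 0 by norm_num, show (-1 * δ - 3 + 1 : ℝ) = -1 * δ - 2 by ring,
        Real.rpow_zero, Real.rpow_one, one_mul]
    have hA0 : ((p - 1) / p : ℝ) = 0 := by rw [← hp1]; norm_num
    have hB1 : (1 / p : ℝ) = 1 := by rw [← hp1]; norm_num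
    rw [hA0, hB1, Real.rpow_zero, Real.rpow_one, one_mul]
    exact le_of_le_of_eq hlim hZB
  · -- 1 < p
    have hpm1 : (0:ℝ) < p - 1 := by linarith
    have hpq : (p / (p - 1)).HolderConjugate p := (Real.HolderConjugate.conjExponent hp1).symm
    set q : ℝ := p / (p - 1) with hq
    have hq0 : (0:ℝ) < q := div_pos hp0 hpm1
    set r : ℝ := (p - 1) / p with hr
    have hr0' : (0:ℝ) < r := div_pos hpm1 hp0
    have hrq : r * q = 1 := by rw [hr, hq]; field_simp
    have hf_cont : Continuous (fun x : E3 => (‖x‖ ^ (-p*δ-3) * |u x| ^ p) ^ r) :=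
      hfAcont.rpow_const (fun x => Or.inr hr0'.le)
    have hg_cont : Continuous
        (fun x : E3 => (‖x‖ ^ (-p*δ-3+p) * ‖fderiv ℝ u x‖ ^ p) ^ (1/p)) :=
      hfBcont.rpow_const (fun x => Or.inr (by positivity))
    have hf_supp : HasCompactSupport
        (fun x : E3 => (‖x‖ ^ (-p*δ-3) * |u x| ^ p) ^ r) := by
      refine HasCompactSupport.intro hKcpt (fun x hx => ?_)
      rw [hsuppu x hx, abs_zero, Real.zero_rpow hpne, mul_zero, Real.zero_rpow hr0'.ne']
    have hg_supp : HasCompactSupport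
        (fun x : E3 => (‖x‖ ^ (-p*δ-3+p) * ‖fderiv ℝ u x‖ ^ p) ^ (1/p)) := by
      refine HasCompactSupport.intro hKcpt (fun x hx => ?_)
      rw [hDuK x hx, norm_zero, Real.zero_rpow hpne, mul_zero,
        Real.zero_rpow (by positivity : (1/p : ℝ) ≠ 0)]
    have hfmem : MemLp (fun x : E3 => (‖x‖ ^ (-p*δ-3) * |u x| ^ p) ^ r)
        (ENNReal.ofReal q) volume := hf_cont.memLp_of_hasCompactSupport hf_supp
    have hgmem : MemLp (fun x : E3 => (‖x‖ ^ (-p*δ-3+p) * ‖fderiv ℝ u x‖ ^ p) ^ (1/p))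
        (ENNReal.ofReal p) volume := hg_cont.memLp_of_hasCompactSupport hg_supp
    have hHold :
        (∫ x : E3, (‖x‖ ^ (-p*δ-3) * |u x| ^ p) ^ r
            * (‖x‖ ^ (-p*δ-3+p) * ‖fderiv ℝ u x‖ ^ p) ^ (1/p))
          ≤ (∫ x : E3, ((‖x‖ ^ (-p*δ-3) * |u x| ^ p) ^ r) ^ q) ^ (1/q)
            * (∫ x : E3, ((‖x‖ ^ (-p*δ-3+p) * ‖fderiv ℝ u x‖ ^ p) ^ (1/p)) ^ p) ^ (1/p) :=
      integral_mul_le_Lp_mul_Lq_of_nonneg hpq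
        (Filter.Eventually.of_forall (fun x => Real.rpow_nonneg
          (mul_nonneg (Real.rpow_nonneg (norm_nonneg x) _)
            (Real.rpow_nonneg (abs_nonneg _) _)) _))
        (Filter.Eventually.of_forall (fun x => Real.rpow_nonneg
          (mul_nonneg (Real.rpow_nonneg (norm_nonneg x) _)
            (Real.rpow_nonneg (norm_nonneg _) _)) _))
        hfmem hgmem
    have h3 : (∫ x : E3, ((‖x‖ ^ (-p*δ-3) * |u x| ^ p) ^ r) ^ q)
        = ∫ x : E3, ‖x‖ ^ (-p*δ-3) * |u x| ^ p := by
      refine integral_congr_ae (Filter.Eventually.of_forall (fun x => ?_))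
      show ((‖x‖ ^ (-p*δ-3) * |u x| ^ p) ^ r) ^ q = ‖x‖ ^ (-p*δ-3) * |u x| ^ p
      rw [← Real.rpow_mul (by positivity), hrq, Real.rpow_one]
    have h4 : (∫ x : E3, ((‖x‖ ^ (-p*δ-3+p) * ‖fderiv ℝ u x‖ ^ p) ^ (1/p)) ^ p)
        = ∫ x : E3, ‖x‖ ^ (-p*δ-3+p) * ‖fderiv ℝ u x‖ ^ p := by
      refine integral_congr_ae (Filter.Eventually.of_forall (fun x => ?_))
      show ((‖x‖ ^ (-p*δ-3+p) * ‖fderiv ℝ u x‖ ^ p) ^ (1/p)) ^ p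
        = ‖x‖ ^ (-p*δ-3+p) * ‖fderiv ℝ u x‖ ^ p
      rw [← Real.rpow_mul (by positivity), show (1/p) * p = 1 by field_simp, Real.rpow_one]
    have h6 : (1/q : ℝ) = r := by rw [hq, one_div_div, hr]
    rw [h6, h3, h4] at hHold
    -- identify ∫ Z∞ with ∫ f * g
    have hae : ∀ᵐ x : E3 ∂volume, x ≠ (0 : E3) := by
      rw [MeasureTheory.ae_iff]
      have hset : {x : E3 | ¬ x ≠ 0} = {(0:E3)} := by ext y; simp
      rw [hset]
      exact measure_singleton 0
    have h5 : (∫ x : E3, ‖x‖ ^ (-p * δ - 2) * (((u x) ^ 2) ^ ((p - 1) / 2) * ‖fderiv ℝ u x‖))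
        = ∫ x : E3, (‖x‖ ^ (-p*δ-3) * |u x| ^ p) ^ r
            * (‖x‖ ^ (-p*δ-3+p) * ‖fderiv ℝ u x‖ ^ p) ^ (1/p) := by
      refine integral_congr_ae ?_
      filter_upwards [hae] with x hx
      have hnx : (0:ℝ) < ‖x‖ := norm_pos_iff.mpr hx
      rw [Real.mul_rpow (Real.rpow_nonneg (norm_nonneg x) _) (Real.rpow_nonneg (abs_nonneg _) _),
        Real.mul_rpow (Real.rpow_nonneg (norm_nonneg x) _) (Real.rpow_nonneg (norm_nonneg _) _),
        ← Real.rpow_mul (norm_nonneg x), ← Real.rpow_mul (norm_nonneg x),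
        ← Real.rpow_mul (abs_nonneg (u x)), ← Real.rpow_mul (norm_nonneg (fderiv ℝ u x)),
        show p * r = p - 1 by rw [hr]; field_simp,
        show p * (1/p) = 1 by field_simp, Real.rpow_one, sq_rpow_half]
      rw [show ‖x‖ ^ ((-p*δ-3) * r) * |u x| ^ (p-1) * (‖x‖ ^ ((-p*δ-3+p) * (1/p)) * ‖fderiv ℝ u x‖)
          = (‖x‖ ^ ((-p*δ-3) * r) * ‖x‖ ^ ((-p*δ-3+p) * (1/p))) * (|u x| ^ (p-1) * ‖fderiv ℝ u x‖)
          by ring, ← Real.rpow_add hnx,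
        show (-p*δ-3) * r + (-p*δ-3+p) * (1/p) = -p * δ - 2 by rw [hr]; field_simp; ring]
    calc |δ| * (∫ x : E3, ‖x‖ ^ (-p * δ - 3) * |u x| ^ p)
        ≤ ∫ x : E3, ‖x‖ ^ (-p * δ - 2) * (((u x) ^ 2) ^ ((p - 1) / 2) * ‖fderiv ℝ u x‖) := hlim
      _ = ∫ x : E3, (‖x‖ ^ (-p*δ-3) * |u x| ^ p) ^ r
            * (‖x‖ ^ (-p*δ-3+p) * ‖fderiv ℝ u x‖ ^ p) ^ (1/p) := h5
      _ ≤ (∫ x : E3, ‖x‖ ^ (-p*δ-3) * |u x| ^ p) ^ r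
            * (∫ x : E3, ‖x‖ ^ (-p*δ-3+p) * ‖fderiv ℝ u x‖ ^ p) ^ (1/p) := hHold

end Main

end HardyAux

/-- **weighted Hardy inequality on the punctured ball.** For every `δ ≠ 0`
and every smooth function `u` on `B \ {0} ⊂ ℝ³` with compact support in `B̄ \ {0}`
(requiring `u ≡ 0` on `∂B` only when `δ < 0`), one has
`‖u‖_{L^p_{ρ,δ}} ≤ (1/|δ|) ‖∇u‖_{L^p_{ρ,δ−1}}`, where
`‖u‖_{L^p_{ρ,δ}}^p = ∫ |ρ^{−δ−3/p} u|^p dv = ∫ ρ^{−pδ−3} |u|^p dv`. -/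
theorem weighted_hardy_punctured_ball
    (p δ : ℝ) (hp : 1 ≤ p) (hδ : δ ≠ 0)
    (u : E3 → ℝ)
    (hsmooth : ContDiffOn ℝ (⊤ : ℕ∞) u {x : E3 | x ≠ 0})
    (hsupp : tsupport u ⊆ Metric.closedBall (0 : E3) 1 \ {0})
    (hbdry : δ < 0 → ∀ x : E3, ‖x‖ = 1 → u x = 0) :
    (∫ x in Metric.ball (0 : E3) 1, ‖x‖ ^ (-p * δ - 3) * |u x| ^ p) ^ (1 / p) ≤
      (1 / |δ|) *
        (∫ x in Metric.ball (0 : E3) 1,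
          ‖x‖ ^ (-p * (δ - 1) - 3) * ‖fderiv ℝ u x‖ ^ p) ^ (1 / p) := by
  have hp0 : (0:ℝ) < p := lt_of_lt_of_le one_pos hp
  have hpne : p ≠ 0 := hp0.ne'
  have h0K : (0:E3) ∉ tsupport u := fun h => (hsupp h).2 rfl
  obtain ⟨r0, hr0, hball⟩ := Metric.isOpen_iff.mp (isClosed_tsupport u).isOpen_compl 0 h0K
  have hu0 : ∀ x ∈ Metric.ball (0:E3) r0, u x = 0 := fun x hx =>
    image_eq_zero_of_notMem_tsupport (hball hx)
  have hK1 : tsupport u ⊆ Metric.closedBall (0:E3) 1 := hsupp.trans Set.diff_subset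
  have hcpt : HasCompactSupport u :=
    (isCompact_closedBall (0:E3) 1).of_isClosed_subset (isClosed_tsupport u) hK1
  have hu' : ContDiff ℝ (⊤ : ℕ∞) u := HardyAux.glue hr0 hu0 hsmooth
  -- convert set integrals to integrals over all of space
  have hb2cb : ∀ f : E3 → ℝ, ∫ x in Metric.ball (0:E3) 1, f x
      = ∫ x in Metric.closedBall (0:E3) 1, f x := by
    intro f
    apply setIntegral_congr_set
    rw [MeasureTheory.ae_eq_set]
    constructor
    · rw [Set.diff_eq_empty.2 Metric.ball_subset_closedBall]
      exact measure_empty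
    · rw [Metric.closedBall_diff_ball]
      exact Measure.addHaar_sphere volume 0 1
  have hA : (∫ x in Metric.ball (0:E3) 1, ‖x‖ ^ (-p * δ - 3) * |u x| ^ p)
      = ∫ x : E3, ‖x‖ ^ (-p * δ - 3) * |u x| ^ p := by
    rw [hb2cb]
    apply setIntegral_eq_integral_of_forall_compl_eq_zero
    intro x hx
    have hxK : x ∉ tsupport u := fun h => hx (hK1 h)
    rw [image_eq_zero_of_notMem_tsupport hxK, abs_zero, Real.zero_rpow hpne, mul_zero]
  have hB : (∫ x in Metric.ball (0:E3) 1, ‖x‖ ^ (-p * (δ - 1) - 3) * ‖fderiv ℝ u x‖ ^ p)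
      = ∫ x : E3, ‖x‖ ^ (-p * δ - 3 + p) * ‖fderiv ℝ u x‖ ^ p := by
    simp only [show (-p * (δ - 1) - 3 : ℝ) = -p * δ - 3 + p by ring]
    rw [hb2cb]
    apply setIntegral_eq_integral_of_forall_compl_eq_zero
    intro x hx
    have hxK : x ∉ tsupport u := fun h => hx (hK1 h)
    have hDu : fderiv ℝ u x = 0 := by
      by_contra h
      exact hxK (support_fderiv_subset (𝕜 := ℝ) (Function.mem_support.mpr h))
    rw [hDu, norm_zero, Real.zero_rpow hpne, mul_zero]
  rw [hA, hB]
  have hmain := HardyAux.hardy_main hp hδ hr0 hu' hu0 hcpt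
  set A : ℝ := ∫ x : E3, ‖x‖ ^ (-p * δ - 3) * |u x| ^ p with hAdef
  set B : ℝ := ∫ x : E3, ‖x‖ ^ (-p * δ - 3 + p) * ‖fderiv ℝ u x‖ ^ p with hBdef
  have hA0 : 0 ≤ A := by
    refine integral_nonneg fun x => ?_
    show (0:ℝ) ≤ ‖x‖ ^ (-p * δ - 3) * |u x| ^ p
    positivity
  have hB0 : 0 ≤ B := by
    refine integral_nonneg fun x => ?_
    show (0:ℝ) ≤ ‖x‖ ^ (-p * δ - 3 + p) * ‖fderiv ℝ u x‖ ^ p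
    positivity
  have hδ0 : (0:ℝ) < |δ| := abs_pos.mpr hδ
  rcases eq_or_lt_of_le hA0 with hA00 | hA00
  · rw [← hA00, Real.zero_rpow (by positivity : (1/p : ℝ) ≠ 0)]
    positivity
  · have h1 : A = A ^ ((p-1)/p) * A ^ (1/p) := by
      rw [← Real.rpow_add hA00, show ((p-1)/p + 1/p : ℝ) = 1 by field_simp; ring, Real.rpow_one]
    have h2 : |δ| * (A ^ ((p-1)/p) * A ^ (1/p)) ≤ A ^ ((p-1)/p) * B ^ (1/p) := by
      rw [← h1]; exact hmain
    have h3 : A ^ ((p-1)/p) * (|δ| * A ^ (1/p)) ≤ A ^ ((p-1)/p) * B ^ (1/p) := by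
      calc A ^ ((p-1)/p) * (|δ| * A ^ (1/p)) = |δ| * (A ^ ((p-1)/p) * A ^ (1/p)) := by ring
        _ ≤ _ := h2
    have h4 : |δ| * A ^ (1/p) ≤ B ^ (1/p) :=
      le_of_mul_le_mul_left h3 (Real.rpow_pos_of_pos hA00 _)
    rw [show (1/|δ| : ℝ) * B ^ (1/p) = B ^ (1/p) / |δ| by ring, le_div_iff₀ hδ0, mul_comm]
    exact h4


end
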